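/- Let G be a connected simple graph and let n, n' be vertices with graph distance d(n, n') ≥ 2. Then the Connes distance is strictly smaller than the graph distance: dist_C(n, n') < d(n, n'). (Indeed, on any minimal path joining n and n' there is a vertex incident with two consecutive path edges, and admissibility forbids both incident jumps from being equal to 1; this forces every admissible f to satisfy |f(n') − f(n)| ≤ d(n,n') − 2 + √2.) -/

import Mathlib

/-- A vertex function `f` is admissible for `G` if `∑_{j ~ i} (f j - f i)² ≤ 1` at every
vertex `i`. -/
def Admissible {V : Type*} (G : SimpleGraph V) [∀ v, Fintype (G.neighborSet v)]
    (f : V → ℝ) : Prop :=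
  ∀ i : V, ∑ j ∈ G.neighborFinset i, (f j - f i) ^ 2 ≤ 1

/-- The Connes distance: the supremum of `|f n' - f n|` over admissible functions `f`. -/
noncomputable def distC {V : Type*} (G : SimpleGraph V) [∀ v, Fintype (G.neighborSet v)]
    (n n' : V) : ℝ :=
  sSup {r : ℝ | ∃ f : V → ℝ, Admissible G f ∧ r = |f n' - f n|}

lemma admissible_edge {V : Type*} {G : SimpleGraph V} [∀ v, Fintype (G.neighborSet v)]
    {f : V → ℝ} (hf : Admissible G f) {i j : V} (hij : G.Adj i j) :
    |f j - f i| ≤ 1 := by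
  have h1 : (f j - f i) ^ 2 ≤ 1 := by
    refine le_trans ?_ (hf i)
    exact Finset.single_le_sum (f := fun k => (f k - f i) ^ 2)
      (fun k _ => sq_nonneg _) (by rwa [SimpleGraph.mem_neighborFinset])
  calc |f j - f i| = Real.sqrt ((f j - f i) ^ 2) := (Real.sqrt_sq_eq_abs _).symm
    _ ≤ Real.sqrt 1 := Real.sqrt_le_sqrt h1
    _ = 1 := Real.sqrt_one

lemma admissible_walk {V : Type*} {G : SimpleGraph V} [∀ v, Fintype (G.neighborSet v)]
    {f : V → ℝ} (hf : Admissible G f) {a b : V} (p : G.Walk a b) :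
    |f b - f a| ≤ (p.length : ℝ) := by
  induction p with
  | nil => simp
  | cons hadj q ih =>
    rename_i u v w
    calc |f w - f u| ≤ |f v - f u| + |f w - f v| := by
          have := abs_add_le (f v - f u) (f w - f v)
          simpa using this
      _ ≤ 1 + q.length := add_le_add (admissible_edge hf hadj) ih
      _ = ((q.length + 1 : ℕ) : ℝ) := by push_cast; ring
      _ = _ := by simp [SimpleGraph.Walk.length_cons]

/-- In a connected locally finite simple graph, for vertices at graph distance at least `2`
the Connes distance is strictly smaller than the graph distance. -/
theorem stmt_11 {V : Type*} (G : SimpleGraph V) [∀ v, Fintype (G.neighborSet v)]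
    (hG : G.Connected) (n n' : V) (h : 2 ≤ G.dist n n') :
    distC G n n' < (G.dist n n' : ℝ) := by
  obtain ⟨p, hp⟩ := hG.exists_walk_length_eq_dist n n'
  -- peel two edges off p
  have key : ∀ f : V → ℝ, Admissible G f →
      |f n' - f n| ≤ (G.dist n n' : ℝ) - 2 + Real.sqrt 2 := by
    intro f hf
    classical
    cases p with
    | nil => simp at hp; rw [SimpleGraph.dist_self] at h; omega
    | cons h1 p' =>
      cases p' with
      | nil => simp at hp; omega
      | cons h2 q =>
        rename_i v1 v2
        have hlen : G.dist n n' = q.length + 2 := by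
          simp [SimpleGraph.Walk.length_cons] at hp; omega
        have hne : n ≠ v2 := by
          intro he
          have : G.dist n n' ≤ q.length := by
            rw [he]; exact SimpleGraph.dist_le q
          omega
        -- two squares at v1
        have hmem1 : n ∈ G.neighborFinset v1 := by
          rw [SimpleGraph.mem_neighborFinset]; exact h1.symm
        have hmem2 : v2 ∈ G.neighborFinset v1 := by
          rw [SimpleGraph.mem_neighborFinset]; exact h2
        have hsq : (f n - f v1) ^ 2 + (f v2 - f v1) ^ 2 ≤ 1 := by
          have hsub : ({n, v2} : Finset V) ⊆ G.neighborFinset v1 := by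
            intro x hx
            simp only [Finset.mem_insert, Finset.mem_singleton] at hx
            rcases hx with rfl | rfl <;> assumption
          calc (f n - f v1) ^ 2 + (f v2 - f v1) ^ 2
              = ∑ j ∈ ({n, v2} : Finset V), (f j - f v1) ^ 2 := by
                rw [Finset.sum_pair hne]
            _ ≤ ∑ j ∈ G.neighborFinset v1, (f j - f v1) ^ 2 :=
                Finset.sum_le_sum_of_subset_of_nonneg hsub (fun _ _ _ => sq_nonneg _)
            _ ≤ 1 := hf v1
        set a := f n - f v1 with ha
        set b := f v2 - f v1 with hb
        have habs : |a| + |b| ≤ Real.sqrt 2 := by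
          have h2' : (|a| + |b|) ^ 2 ≤ 2 := by
            have := sq_nonneg (|a| - |b|)
            nlinarith [sq_abs a, sq_abs b]
          calc |a| + |b| = Real.sqrt ((|a| + |b|) ^ 2) := by
                rw [Real.sqrt_sq (by positivity)]
            _ ≤ Real.sqrt 2 := Real.sqrt_le_sqrt h2'
        have hq : |f n' - f v2| ≤ (q.length : ℝ) := admissible_walk hf q
        have htri : |f n' - f n| ≤ |f v1 - f n| + (|f v2 - f v1| + |f n' - f v2|) := by
          have := abs_add_le (f v1 - f n) (f v2 - f v1 + (f n' - f v2))
          have h2 := abs_add_le (f v2 - f v1) (f n' - f v2)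
          calc |f n' - f n| = |(f v1 - f n) + (f v2 - f v1 + (f n' - f v2))| := by
                ring_nf
            _ ≤ |f v1 - f n| + |f v2 - f v1 + (f n' - f v2)| := abs_add_le _ _
            _ ≤ _ := by linarith
        have h1a : |f v1 - f n| = |a| := by rw [ha, abs_sub_comm]
        rw [hlen]
        push_cast
        calc |f n' - f n| ≤ |f v1 - f n| + (|f v2 - f v1| + |f n' - f v2|) := htri
          _ = |a| + |b| + |f n' - f v2| := by rw [h1a, hb]; ring
          _ ≤ Real.sqrt 2 + (q.length : ℝ) := by linarith
          _ = (q.length : ℝ) + 2 - 2 + Real.sqrt 2 := by ring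
  have hd2 : (2 : ℝ) ≤ (G.dist n n' : ℝ) := by exact_mod_cast h
  have hs2 : Real.sqrt 2 < 2 := by
    nlinarith [Real.sq_sqrt (by norm_num : (0:ℝ) ≤ 2), Real.sqrt_nonneg 2]
  have hsup : distC G n n' ≤ (G.dist n n' : ℝ) - 2 + Real.sqrt 2 := by
    apply Real.sSup_le
    · rintro r ⟨f, hf, rfl⟩
      exact key f hf
    · have := Real.sqrt_nonneg 2; linarith
  linarith
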